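/- For any finite graph G = (V,E) and all real q and w, the polynomial identity Z_G(q,w) = Σ_{S⊆V} (1+w)^{e(S)} Z_{G−S}(q−1,w) holds, where e(S) is the number of edges induced by S and G−S is the subgraph induced by V∖S. -/

import Mathlib

open Finset

/-- The number of connected components of the spanning subgraph `(V, A)`. -/
noncomputable def numComponents {V : Type*} (A : Finset (Sym2 V)) : ℕ :=
  Nat.card (SimpleGraph.fromEdgeSet (↑A : Set (Sym2 V))).ConnectedComponent

/-- The partition function of the random cluster model. -/
noncomputable def rcPartition {V : Type*} [Fintype V] [DecidableEq V]
    (G : SimpleGraph V) [DecidableRel G.Adj] (q w : ℝ) : ℝ :=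
  ∑ A ∈ G.edgeFinset.powerset, q ^ numComponents A * w ^ A.card

/-- The number of edges of `G` induced by the vertex set `S`. -/
noncomputable def inducedEdgeCount {V : Type*} [Fintype V] [DecidableEq V]
    (G : SimpleGraph V) [DecidableRel G.Adj] (S : Finset V) : ℕ :=
  (G.edgeFinset.filter (fun e => ∀ v ∈ e, v ∈ S)).card

instance {V : Type*} (G : SimpleGraph V) [DecidableRel G.Adj] (s : Set V) :
    DecidableRel (SimpleGraph.induce s G).Adj :=
  fun a b => inferInstanceAs (Decidable (G.Adj a b))

/-! ### Auxiliary material -/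

section Aux

private lemma sum_pow_card {α : Type*} [DecidableEq α] (s : Finset α) (x : ℝ) :
    ∑ t ∈ s.powerset, x ^ t.card = (1 + x) ^ s.card := by
  calc ∑ t ∈ s.powerset, x ^ t.card = ∏ _i ∈ s, (x + 1) := by
        rw [Finset.prod_add]; simp
    _ = (1 + x) ^ s.card := by rw [Finset.prod_const, add_comm]

variable {V : Type*}

private lemma mem_of_walk {Gr : SimpleGraph V} {W : Set V}
    (hW : ∀ ⦃u v : V⦄, u ∈ W → Gr.Adj u v → v ∈ W) :
    ∀ {u v : V}, Gr.Walk u v → u ∈ W → v ∈ W := by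
  intro u v p
  induction p with
  | nil => exact id
  | cons h _ ih => exact fun hu => ih (hW hu h)

private lemma supp_subset_of_closed {Gr : SimpleGraph V} {W : Set V}
    (hW : ∀ ⦃u v : V⦄, u ∈ W → Gr.Adj u v → v ∈ W) {v : V} (hv : v ∈ W) :
    (Gr.connectedComponentMk v).supp ⊆ W := by
  intro u hu
  rw [SimpleGraph.ConnectedComponent.mem_supp_iff] at hu
  obtain ⟨p⟩ := (SimpleGraph.ConnectedComponent.exact hu).symm
  exact mem_of_walk hW p hv

private def homInduce (Gr : SimpleGraph V) (W : Set V) : Gr.induce W →g Gr :=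
  ⟨Subtype.val, fun {a b} h => h⟩

private lemma reachable_induce {Gr : SimpleGraph V} {W : Set V}
    (hW : ∀ ⦃u v : V⦄, u ∈ W → Gr.Adj u v → v ∈ W) :
    ∀ {u v : V} (p : Gr.Walk u v) (hu : u ∈ W) (hv : v ∈ W),
      (Gr.induce W).Reachable ⟨u, hu⟩ ⟨v, hv⟩ := by
  intro u v p
  induction p with
  | nil => intro hu hv; exact SimpleGraph.Reachable.refl _
  | @cons u x v h p ih =>
      intro hu hv
      have hx : x ∈ W := hW hu h
      have hadj : (Gr.induce W).Adj ⟨u, hu⟩ ⟨x, hx⟩ := h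
      exact hadj.reachable.trans (ih hx hv)

private lemma card_comp_induce {Gr : SimpleGraph V} {W : Set V}
    (hW : ∀ ⦃u v : V⦄, u ∈ W → Gr.Adj u v → v ∈ W) :
    Nat.card (Gr.induce W).ConnectedComponent
      = Nat.card {c : Gr.ConnectedComponent // c.supp ⊆ W} := by
  refine Nat.card_congr (Equiv.ofBijective
    (Quot.lift (fun a : W => (⟨Gr.connectedComponentMk ↑a, supp_subset_of_closed hW a.2⟩ :
        {c : Gr.ConnectedComponent // c.supp ⊆ W}))
      (fun a b hab =>
        Subtype.ext (SimpleGraph.ConnectedComponent.sound (hab.map (homInduce Gr W)))))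
    ⟨?_, ?_⟩)
  · intro c d
    refine SimpleGraph.ConnectedComponent.ind₂ (fun a b hab => ?_) c d
    have h1 : Gr.connectedComponentMk ↑a = Gr.connectedComponentMk ↑b :=
      congrArg Subtype.val hab
    obtain ⟨p⟩ := SimpleGraph.ConnectedComponent.exact h1
    exact SimpleGraph.ConnectedComponent.sound (reachable_induce hW p a.2 b.2)
  · rintro ⟨c, hc⟩
    obtain ⟨v, rfl⟩ := c.exists_rep
    have hv : v ∈ W := hc ((SimpleGraph.ConnectedComponent.mem_supp_iff _ _).mpr rfl)
    exact ⟨(Gr.induce W).connectedComponentMk ⟨v, hv⟩, rfl⟩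

/-- `S` is compatible with the edge set `A` if every edge of `A` lies entirely
inside `S` or entirely outside `S`. -/
def compatible [DecidableEq V] (S : Finset V) (A : Finset (Sym2 V)) : Prop :=
  ∀ e ∈ A, (∀ v ∈ e, v ∈ S) ∨ (∀ v ∈ e, v ∉ S)

instance [Fintype V] [DecidableEq V] (S : Finset V) : DecidablePred (compatible S) :=
  fun A => by unfold compatible; infer_instance

private lemma closed_of_compatible [Fintype V] [DecidableEq V] {S : Finset V} {A : Finset (Sym2 V)}
    (h : compatible S A) :
    ∀ ⦃u v : V⦄, u ∈ (↑(Sᶜ) : Set V) →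
      (SimpleGraph.fromEdgeSet (↑A : Set (Sym2 V))).Adj u v → v ∈ (↑(Sᶜ) : Set V) := by
  intro u v hu hadj
  rw [SimpleGraph.fromEdgeSet_adj] at hadj
  simp only [Finset.coe_compl, Set.mem_compl_iff, Finset.mem_coe] at hu ⊢
  rcases h _ hadj.1 with h1 | h1
  · exact absurd (h1 u (by simp)) hu
  · exact h1 v (by simp)

private lemma step2 [Fintype V] [DecidableEq V] (q : ℝ) (A : Finset (Sym2 V)) :
    ∑ S ∈ Finset.univ.filter (fun S : Finset V => compatible S A),
        (q - 1) ^ Nat.card (SimpleGraph.induce (↑(Sᶜ) : Set V)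
          (SimpleGraph.fromEdgeSet (↑A : Set (Sym2 V)))).ConnectedComponent
      = q ^ numComponents A := by
  classical
  set Gr := SimpleGraph.fromEdgeSet (↑A : Set (Sym2 V)) with hGr
  haveI : Fintype Gr.ConnectedComponent := Fintype.ofFinite _
  have hrw : ∀ S ∈ Finset.univ.filter (fun S : Finset V => compatible S A),
      (q - 1) ^ Nat.card (SimpleGraph.induce (↑(Sᶜ) : Set V) Gr).ConnectedComponent
        = (q - 1) ^ (Finset.univ.filter
            (fun c : Gr.ConnectedComponent => c.supp ⊆ (↑(Sᶜ) : Set V))).card := by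
    intro S hS
    have hS' : compatible S A := (Finset.mem_filter.mp hS).2
    rw [card_comp_induce (closed_of_compatible hS'), Nat.card_eq_fintype_card,
      Fintype.card_subtype]
  rw [Finset.sum_congr rfl hrw]
  have key : ∑ S ∈ Finset.univ.filter (fun S : Finset V => compatible S A),
      (q - 1) ^ (Finset.univ.filter
        (fun c : Gr.ConnectedComponent => c.supp ⊆ (↑(Sᶜ) : Set V))).card
      = ∑ t ∈ (Finset.univ : Finset Gr.ConnectedComponent).powerset, (q - 1) ^ t.card := by
    refine Finset.sum_nbij'
      (i := fun S => Finset.univ.filter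
        (fun c : Gr.ConnectedComponent => c.supp ⊆ (↑(Sᶜ) : Set V)))
      (j := fun t => Finset.univ.filter (fun v : V => Gr.connectedComponentMk v ∉ t))
      ?_ ?_ ?_ ?_ ?_
    · intro S _
      exact Finset.mem_powerset.mpr (Finset.filter_subset _ _)
    · intro t _
      refine Finset.mem_filter.mpr ⟨Finset.mem_univ _, ?_⟩
      intro e he
      induction e with
      | _ u v =>
        by_cases huv : u = v
        · subst huv
          by_cases hu : u ∈ Finset.univ.filter (fun v : V => Gr.connectedComponentMk v ∉ t)
          · left; intro x hx; rw [Sym2.mem_iff] at hx; rcases hx with rfl | rfl <;> exact hu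
          · right; intro x hx; rw [Sym2.mem_iff] at hx; rcases hx with rfl | rfl <;> exact hu
        · have hadj : Gr.Adj u v := by
            rw [hGr, SimpleGraph.fromEdgeSet_adj]
            exact ⟨he, huv⟩
          have hcc : Gr.connectedComponentMk u = Gr.connectedComponentMk v :=
            SimpleGraph.ConnectedComponent.connectedComponentMk_eq_of_adj hadj
          by_cases hu : Gr.connectedComponentMk u ∈ t
          · right
            intro x hx
            rw [Sym2.mem_iff] at hx
            simp only [Finset.mem_filter, Finset.mem_univ, true_and, not_not]
            rcases hx with rfl | rfl
            · exact hu
            · exact hcc ▸ hu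
          · left
            intro x hx
            rw [Sym2.mem_iff] at hx
            simp only [Finset.mem_filter, Finset.mem_univ, true_and]
            rcases hx with rfl | rfl
            · exact hu
            · exact hcc ▸ hu
    · intro S hS
      have hS' : compatible S A := (Finset.mem_filter.mp hS).2
      ext v
      simp only [Finset.mem_filter, Finset.mem_univ, true_and, not_forall]
      constructor
      · intro h
        by_contra hv
        have hvW : v ∈ (↑(Sᶜ) : Set V) := by simpa using hv
        exact h (supp_subset_of_closed (closed_of_compatible hS') hvW)
      · intro hv hsub
        have : v ∈ (Gr.connectedComponentMk v).supp :=
          (SimpleGraph.ConnectedComponent.mem_supp_iff _ _).mpr rfl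
        have := hsub this
        simp only [Finset.mem_coe, Finset.mem_compl] at this
        exact this hv
    · intro t _
      ext c
      simp only [Finset.mem_filter, Finset.mem_univ, true_and]
      obtain ⟨v, rfl⟩ := c.exists_rep
      have hmem : ∀ x : V, x ∈ (↑((Finset.univ.filter
          (fun v : V => Gr.connectedComponentMk v ∉ t))ᶜ) : Set V)
          ↔ Gr.connectedComponentMk x ∈ t := by
        intro x
        simp [Finset.mem_coe, Finset.mem_compl]
      constructor
      · intro hsub
        have hv : v ∈ (Gr.connectedComponentMk v).supp :=
          (SimpleGraph.ConnectedComponent.mem_supp_iff _ _).mpr rfl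
        exact (hmem v).mp (hsub hv)
      · intro hc x hx
        replace hx := (SimpleGraph.ConnectedComponent.mem_supp_iff (Gr.connectedComponentMk v) x).mp hx
        change Gr.connectedComponentMk v ∈ t at hc
        exact (hmem x).mpr (hx ▸ hc)
    · exact fun _ _ => rfl
  rw [key, sum_pow_card]
  have : (1 : ℝ) + (q - 1) = q := by ring
  rw [this, Finset.card_univ, numComponents, ← hGr, Nat.card_eq_fintype_card]

end Aux

section Step1

variable {V : Type*} [Fintype V] [DecidableEq V]

private lemma edge_facts (G : SimpleGraph V) [DecidableRel G.Adj] (S : Finset V)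
    {e' : Sym2 (↑(Sᶜ) : Set V)}
    (he : e' ∈ (SimpleGraph.induce (↑(Sᶜ) : Set V) G).edgeFinset) :
    e'.map Subtype.val ∈ G.edgeFinset ∧ ∀ v ∈ e'.map Subtype.val, v ∉ S := by
  induction e' with
  | _ a b =>
    rw [SimpleGraph.mem_edgeFinset] at he
    have hadj : G.Adj ↑a ↑b := he
    constructor
    · rw [Sym2.map_pair_eq, SimpleGraph.mem_edgeFinset]
      exact hadj
    · intro v hv
      rw [Sym2.map_pair_eq, Sym2.mem_iff] at hv
      rcases hv with rfl | rfl
      · have := a.2; simpa using this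
      · have := b.2; simpa using this

private lemma step1 (G : SimpleGraph V) [DecidableRel G.Adj] (q w : ℝ) (S : Finset V) :
    (1 + w) ^ inducedEdgeCount G S *
        rcPartition (SimpleGraph.induce (↑(Sᶜ) : Set V) G) (q - 1) w
      = ∑ A ∈ G.edgeFinset.powerset.filter (compatible S),
          (q - 1) ^ Nat.card (SimpleGraph.induce (↑(Sᶜ) : Set V)
            (SimpleGraph.fromEdgeSet (↑A : Set (Sym2 V)))).ConnectedComponent
            * w ^ A.card := by
  classical
  set Es : Finset (Sym2 V) := G.edgeFinset.filter (fun e => ∀ v ∈ e, v ∈ S) with hEs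
  set Gi := SimpleGraph.induce (↑(Sᶜ) : Set V) G with hGi
  have hEC : inducedEdgeCount G S = Es.card := rfl
  rw [hEC, ← sum_pow_card, rcPartition, Finset.sum_mul_sum, ← Finset.sum_product']
  set emb : Sym2 (↑(Sᶜ) : Set V) ↪ Sym2 V :=
    ⟨Sym2.map Subtype.val, Sym2.map.injective Subtype.val_injective⟩ with hemb
  refine Finset.sum_nbij'
    (i := fun p => p.1 ∪ p.2.map emb)
    (j := fun A => (A.filter (fun e => ∀ v ∈ e, v ∈ S),
      Gi.edgeFinset.filter (fun e => emb e ∈ A)))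
    ?_ ?_ ?_ ?_ ?_
  · rintro ⟨B, A'⟩ hp
    rw [Finset.mem_product, Finset.mem_powerset, Finset.mem_powerset] at hp
    obtain ⟨hB, hA'⟩ := hp
    refine Finset.mem_filter.mpr ⟨Finset.mem_powerset.mpr ?_, ?_⟩
    · intro e he
      rcases Finset.mem_union.mp he with he | he
      · exact (Finset.mem_filter.mp (hB he)).1
      · obtain ⟨e', he', rfl⟩ := Finset.mem_map.mp he
        exact (edge_facts G S (hA' he')).1
    · intro e he
      rcases Finset.mem_union.mp he with he | he
      · exact Or.inl (Finset.mem_filter.mp (hB he)).2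
      · obtain ⟨e', he', rfl⟩ := Finset.mem_map.mp he
        exact Or.inr (edge_facts G S (hA' he')).2
  · intro A hA
    rw [Finset.mem_filter, Finset.mem_powerset] at hA
    rw [Finset.mem_product, Finset.mem_powerset, Finset.mem_powerset]
    constructor
    · intro e he
      exact Finset.mem_filter.mpr ⟨hA.1 (Finset.mem_filter.mp he).1,
        (Finset.mem_filter.mp he).2⟩
    · exact Finset.filter_subset _ _
  · rintro ⟨B, A'⟩ hp
    rw [Finset.mem_product, Finset.mem_powerset, Finset.mem_powerset] at hp
    obtain ⟨hB, hA'⟩ := hp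
    have h1 : (B ∪ A'.map emb).filter (fun e => ∀ v ∈ e, v ∈ S) = B := by
      ext e
      simp only [Finset.mem_filter, Finset.mem_union]
      constructor
      · rintro ⟨he | he, hin⟩
        · exact he
        · exfalso
          obtain ⟨e', he', rfl⟩ := Finset.mem_map.mp he
          obtain ⟨_, hout⟩ := edge_facts G S (hA' he')
          induction e' with
          | _ a b =>
            exact hout ↑a (by rw [Sym2.map_pair_eq]; simp) (hin ↑a (by
              show ↑a ∈ emb s(a, b)
              rw [hemb]
              simp [Sym2.map_pair_eq]))
      · intro he
        exact ⟨Or.inl he, (Finset.mem_filter.mp (hB he)).2⟩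
    have h2 : Gi.edgeFinset.filter (fun e => emb e ∈ B ∪ A'.map emb) = A' := by
      ext e'
      simp only [Finset.mem_filter, Finset.mem_union]
      constructor
      · rintro ⟨hei, hin | hin⟩
        · exfalso
          obtain ⟨_, hout⟩ := edge_facts G S hei
          have hinS := (Finset.mem_filter.mp (hB hin)).2
          induction e' with
          | _ a b =>
            refine hout ↑a ?_ (hinS ↑a ?_)
            · show ↑a ∈ emb s(a, b); rw [hemb]; simp [Sym2.map_pair_eq]
            · show ↑a ∈ emb s(a, b); rw [hemb]; simp [Sym2.map_pair_eq]
        · exact (Finset.mem_map' _).mp hin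
      · intro he'
        exact ⟨hA' he', Or.inr ((Finset.mem_map' _).mpr he')⟩
    simp only [h1, h2]
  · intro A hA
    rw [Finset.mem_filter, Finset.mem_powerset] at hA
    obtain ⟨hAE, hAc⟩ := hA
    ext e
    simp only [Finset.mem_union, Finset.mem_filter]
    constructor
    · rintro (⟨he, _⟩ | he)
      · exact he
      · obtain ⟨e', he', rfl⟩ := Finset.mem_map.mp he
        exact (Finset.mem_filter.mp he').2
    · intro he
      rcases hAc e he with hin | hout
      · exact Or.inl ⟨he, hin⟩
      · right
        have heE := hAE he
        rw [SimpleGraph.mem_edgeFinset] at heE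
        induction e with
        | _ u v =>
          have hadj : G.Adj u v := heE
          have hu : u ∈ (↑(Sᶜ) : Set V) := by
            simp only [Finset.coe_compl, Set.mem_compl_iff, Finset.mem_coe]
            exact hout u (by simp)
          have hv : v ∈ (↑(Sᶜ) : Set V) := by
            simp only [Finset.coe_compl, Set.mem_compl_iff, Finset.mem_coe]
            exact hout v (by simp)
          refine Finset.mem_map.mpr ⟨s(⟨u, hu⟩, ⟨v, hv⟩), ?_, ?_⟩
          · refine Finset.mem_filter.mpr ⟨?_, ?_⟩
            · rw [SimpleGraph.mem_edgeFinset]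
              exact hadj
            · show emb s(⟨u, hu⟩, ⟨v, hv⟩) ∈ A
              rw [hemb]
              simpa [Sym2.map_pair_eq] using he
          · show emb s(⟨u, hu⟩, ⟨v, hv⟩) = s(u, v)
            rw [hemb]
            simp [Sym2.map_pair_eq]
  · rintro ⟨B, A'⟩ hp
    rw [Finset.mem_product, Finset.mem_powerset, Finset.mem_powerset] at hp
    obtain ⟨hB, hA'⟩ := hp
    have hdisj : Disjoint B (A'.map emb) := by
      rw [Finset.disjoint_left]
      intro e heB heM
      obtain ⟨e', he', rfl⟩ := Finset.mem_map.mp heM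
      obtain ⟨_, hout⟩ := edge_facts G S (hA' he')
      have hinS := (Finset.mem_filter.mp (hB heB)).2
      induction e' with
      | _ a b =>
        refine hout ↑a ?_ (hinS ↑a ?_)
        · show ↑a ∈ emb s(a, b); rw [hemb]; simp [Sym2.map_pair_eq]
        · show ↑a ∈ emb s(a, b); rw [hemb]; simp [Sym2.map_pair_eq]
    have hcard : (B ∪ A'.map emb).card = B.card + A'.card := by
      rw [Finset.card_union_of_disjoint hdisj, Finset.card_map]
    have hgraph : SimpleGraph.fromEdgeSet (↑A' : Set (Sym2 (↑(Sᶜ) : Set V)))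
        = SimpleGraph.induce (↑(Sᶜ) : Set V)
            (SimpleGraph.fromEdgeSet (↑(B ∪ A'.map emb) : Set (Sym2 V))) := by
      ext a b
      show (SimpleGraph.fromEdgeSet (↑A' : Set (Sym2 (↑(Sᶜ) : Set V)))).Adj a b ↔
        (SimpleGraph.fromEdgeSet (↑(B ∪ A'.map emb) : Set (Sym2 V))).Adj ↑a ↑b
      rw [SimpleGraph.fromEdgeSet_adj, SimpleGraph.fromEdgeSet_adj]
      simp only [Finset.mem_coe, Finset.mem_union]
      constructor
      · rintro ⟨hab, hne⟩
        refine ⟨Or.inr ?_, fun h => hne (Subtype.ext h)⟩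
        have : s(↑a, ↑b) = emb s(a, b) := by rw [hemb]; simp [Sym2.map_pair_eq]
        rw [this]
        exact (Finset.mem_map' _).mpr hab
      · rintro ⟨hab, hne⟩
        refine ⟨?_, fun h => hne (congrArg Subtype.val h)⟩
        rcases hab with hab | hab
        · exfalso
          have hinS := (Finset.mem_filter.mp (hB hab)).2
          have := hinS ↑a (by simp)
          have ha2 := a.2
          simp only [Finset.coe_compl, Set.mem_compl_iff, Finset.mem_coe] at ha2
          exact ha2 this
        · have : s(↑a, ↑b) = emb s(a, b) := by rw [hemb]; simp [Sym2.map_pair_eq]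
          rw [this] at hab
          exact (Finset.mem_map' _).mp hab
    rw [hcard, numComponents, hgraph]
    ring

end Step1

theorem stmt_2 {V : Type*} [Fintype V] [DecidableEq V]
    (G : SimpleGraph V) [DecidableRel G.Adj] (q w : ℝ) :
    rcPartition G q w =
      ∑ S : Finset V, (1 + w) ^ inducedEdgeCount G S *
        rcPartition (SimpleGraph.induce (↑(Sᶜ) : Set V) G) (q - 1) w := by
  classical
  have hmain : rcPartition G q w
      = ∑ A ∈ G.edgeFinset.powerset,
          (∑ S ∈ Finset.univ.filter (fun S : Finset V => compatible S A),
            (q - 1) ^ Nat.card (SimpleGraph.induce (↑(Sᶜ) : Set V)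
              (SimpleGraph.fromEdgeSet (↑A : Set (Sym2 V)))).ConnectedComponent)
            * w ^ A.card := by
    rw [rcPartition]
    exact Finset.sum_congr rfl fun A _ => by rw [step2 q A]
  rw [hmain]
  have hstep : ∀ A ∈ G.edgeFinset.powerset,
      (∑ S ∈ Finset.univ.filter (fun S : Finset V => compatible S A),
        (q - 1) ^ Nat.card (SimpleGraph.induce (↑(Sᶜ) : Set V)
          (SimpleGraph.fromEdgeSet (↑A : Set (Sym2 V)))).ConnectedComponent)
        * w ^ A.card
      = ∑ S : Finset V, if compatible S A then
          (q - 1) ^ Nat.card (SimpleGraph.induce (↑(Sᶜ) : Set V)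
            (SimpleGraph.fromEdgeSet (↑A : Set (Sym2 V)))).ConnectedComponent
            * w ^ A.card else 0 := by
    intro A _
    rw [Finset.sum_mul, Finset.sum_filter]
  rw [Finset.sum_congr rfl hstep, Finset.sum_comm]
  refine Finset.sum_congr rfl fun S _ => ?_
  rw [step1 G q w S, Finset.sum_filter]
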